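/- For n odd and m even, if a tuple u in (Z/mZ)^n has a predecessor under the Ducci map D, then it has exactly two predecessors; moreover if (x_1,...,x_n) is one predecessor, the other is (x_1+m/2, ..., x_n+m/2). -/

import Mathlib

/-- The Ducci map on `(ZMod m)^n`. -/
def ducci (m n : ℕ) [NeZero n] (v : Fin n → ZMod m) : Fin n → ZMod m :=
  fun i => v i + v (i + 1)

lemma half_add_half (m : ℕ) (hm : Even m) :
    (((m / 2 : ℕ) : ZMod m)) + ((m / 2 : ℕ) : ZMod m) = 0 := by
  obtain ⟨t, ht⟩ := hm
  have h2 : m / 2 + m / 2 = m := by omega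
  rw [← Nat.cast_add, h2, ZMod.natCast_self]

lemma two_mul_eq_zero_iff (m : ℕ) (hm : Even m) (hm0 : 0 < m) (x : ZMod m) :
    x + x = 0 ↔ x = 0 ∨ x = ((m / 2 : ℕ) : ZMod m) := by
  haveI : NeZero m := ⟨hm0.ne'⟩
  constructor
  · intro h
    have hx : ((x.val : ℕ) : ZMod m) = x := ZMod.natCast_rightInverse x
    have h' : (((x.val + x.val : ℕ)) : ZMod m) = 0 := by push_cast; rw [hx]; exact h
    have hdvd : m ∣ x.val + x.val := (ZMod.natCast_eq_zero_iff _ _).mp h'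
    have hlt : x.val < m := ZMod.val_lt x
    obtain ⟨k, hk⟩ := hdvd
    have hklt : k < 2 := by
      by_contra hk2
      push_neg at hk2
      have := Nat.mul_le_mul_left m hk2
      omega
    have hk2 : k = 0 ∨ k = 1 := by omega
    rcases hk2 with rfl | rfl
    · left
      have h0 : x.val = 0 := by omega
      rw [← hx, h0, Nat.cast_zero]
    · right
      have h0 : x.val = m / 2 := by omega
      rw [← hx, h0]
  · rintro (rfl | rfl)
    · simp
    · exact half_add_half m hm

open Fin.NatCast in
lemma ducci_ker (m n : ℕ) [NeZero n] (hn : Odd n) (v : Fin n → ZMod m)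
    (h : ducci m n v = 0) : (∀ i, v i = v 0) ∧ v 0 + v 0 = 0 := by
  have hstep : ∀ i : Fin n, v (i + 1) = - v i := by
    intro i
    have hi := congrFun h i
    simp only [ducci, Pi.zero_apply] at hi
    linear_combination hi
  have key : ∀ k : ℕ, v (k : Fin n) = (-1 : ZMod m) ^ k * v 0 := by
    intro k
    induction k with
    | zero => simp
    | succ k ih =>
      have : ((k + 1 : ℕ) : Fin n) = (k : Fin n) + 1 := by push_cast; ring
      rw [this, hstep, ih, pow_succ]
      ring
  have h2 : v 0 + v 0 = 0 := by
    have hn' := key n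
    rw [Fin.natCast_self, hn.neg_one_pow] at hn'
    linear_combination hn'
  refine ⟨fun i => ?_, h2⟩
  have hneg : -v 0 = v 0 := by linear_combination -h2
  have aux : ∀ k : ℕ, (-1 : ZMod m) ^ k * v 0 = v 0 := by
    intro k
    induction k with
    | zero => simp
    | succ k ih =>
      rw [pow_succ, mul_assoc]
      calc (-1 : ZMod m) ^ k * (-1 * v 0) = (-1 : ZMod m) ^ k * v 0 := by
            rw [neg_one_mul, hneg]
        _ = v 0 := ih
  have : v ((i.val : ℕ) : Fin n) = v 0 := by rw [key, aux]
  rwa [Fin.cast_val_eq_self] at this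

theorem ducci_two_predecessors (m n : ℕ) [NeZero n] (hn : Odd n) (hm : Even m)
    (hm0 : 0 < m) (u : Fin n → ZMod m) (h : ∃ v, ducci m n v = u) :
    {v | ducci m n v = u}.ncard = 2 ∧
      ∀ x, ducci m n x = u →
        {v | ducci m n v = u} = {x, fun i => x i + (m / 2 : ℕ)} := by
  haveI : NeZero m := ⟨hm0.ne'⟩
  have hc : ((m / 2 : ℕ) : ZMod m) ≠ 0 := by
    intro h0
    have hdvd : m ∣ m / 2 := (ZMod.natCast_eq_zero_iff _ _).mp h0
    obtain ⟨t, ht⟩ := hm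
    have hpos : 0 < m / 2 := by omega
    have := Nat.le_of_dvd hpos hdvd
    omega
  have hcc := half_add_half m hm
  have hset : ∀ x, ducci m n x = u →
      {v | ducci m n v = u} = {x, fun i => x i + (m / 2 : ℕ)} := by
    intro x hx
    ext v
    simp only [Set.mem_setOf_eq, Set.mem_insert_iff, Set.mem_singleton_iff]
    constructor
    · intro hv
      have hker : ducci m n (v - x) = 0 := by
        funext i
        have h1 := congrFun hv i
        have h2 := congrFun hx i
        simp only [ducci, Pi.sub_apply, Pi.zero_apply] at h1 h2 ⊢
        linear_combination h1 - h2
      obtain ⟨hall, h2⟩ := ducci_ker m n hn (v - x) hker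
      rcases (two_mul_eq_zero_iff m hm hm0 _).mp h2 with h0 | h0
      · left
        funext i
        have hi := hall i
        rw [h0] at hi
        simp only [Pi.sub_apply] at hi
        linear_combination hi
      · right
        funext i
        have hi := hall i
        rw [h0] at hi
        simp only [Pi.sub_apply] at hi
        linear_combination hi
    · rintro (rfl | rfl)
      · exact hx
      · funext i
        have h1 := congrFun hx i
        simp only [ducci] at h1 ⊢
        linear_combination h1 + hcc
  refine ⟨?_, hset⟩
  obtain ⟨x0, hx0⟩ := h
  rw [hset x0 hx0]
  have hne : x0 ≠ fun i => x0 i + ((m / 2 : ℕ) : ZMod m) := by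
    intro heq
    have := congrFun heq 0
    simp only [left_eq_add] at this
    exact hc this
  exact Set.ncard_pair hne
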